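/- Assume |d| > 2 and n ≥ 2. The quantity g_{n+1}(d) := 1 − f_{n+1}(d) + ∑_{j=1}^{n−1} r_j(d) + r_{n−1}(d)·f_{n−1}(d), where r_j(d) = f_n(d)/(f_j(d)·f_{j+1}(d)), satisfies g_{n+1}(d) = 2 + d·f_n(d) + 2·f_{n−1}(d). -/

import Mathlib

noncomputable def f (d : ℝ) : ℕ → ℝ
  | 0 => 0
  | 1 => 1
  | (i + 2) => -d * f d (i + 1) - f d i

noncomputable def r (d : ℝ) (n j : ℕ) : ℝ := f d n / (f d j * f d (j + 1))

lemma fgrow (d : ℝ) (hd : |d| > 2) : ∀ i, 1 ≤ |f d (i + 1)| ∧ |f d i| < |f d (i + 1)| := by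
  intro i
  induction i with
  | zero => simp [f]
  | succ i ih =>
    obtain ⟨h1, h2⟩ := ih
    have hu : f d (i + 2) = -d * f d (i + 1) - f d i := by simp [f]
    have habs : |d * f d (i + 1)| ≤ |d * f d (i + 1) + f d i| + |f d i| := by
      have := abs_add_le (d * f d (i + 1) + f d i) (-f d i)
      simpa using this
    have hm : |d * f d (i + 1)| = |d| * |f d (i + 1)| := abs_mul _ _
    have hrw : |f d (i + 2)| = |d * f d (i + 1) + f d i| := by
      rw [hu, ← abs_neg]; ring_nf
    constructor
    · rw [hrw]; nlinarith [abs_nonneg (f d i)]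
    · rw [hrw]; nlinarith [abs_nonneg (f d i)]

lemma fne (d : ℝ) (hd : |d| > 2) (i : ℕ) : f d (i + 1) ≠ 0 := by
  have := (fgrow d hd i).1
  intro h
  rw [h] at this; simp at this; linarith

lemma cassini (d : ℝ) : ∀ j, f d (j + 2) * f d j - f d (j + 1) ^ 2 = -1 := by
  intro j
  induction j with
  | zero => simp [f]
  | succ j ih =>
    have h3 : f d (j + 3) = -d * f d (j + 2) - f d (j + 1) := by simp [f]
    have h2 : f d (j + 2) = -d * f d (j + 1) - f d j := by simp [f]
    rw [show j + 1 + 2 = j + 3 from rfl, h3, h2]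
    rw [h2] at ih
    linear_combination ih

lemma sum_tel (d : ℝ) (hd : |d| > 2) : ∀ k : ℕ,
    (∑ j ∈ Finset.Icc 1 k, (f d j * f d (j + 1))⁻¹) = f d k / f d (k + 1) := by
  intro k
  induction k with
  | zero => simp [f]
  | succ k ih =>
    rw [Finset.sum_Icc_succ_top (by omega), ih]
    have h1 : f d (k + 1) ≠ 0 := fne d hd k
    have h2 : f d (k + 2) ≠ 0 := fne d hd (k + 1)
    have hc := cassini d k
    field_simp
    rw [show k + 1 + 1 = k + 2 from rfl]
    linear_combination hc

theorem stmt_7 (d : ℝ) (hd : |d| > 2) (n : ℕ) (hn : 2 ≤ n) :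
    1 - f d (n + 1) + (∑ j ∈ Finset.Icc 1 (n - 1), r d n j) +
      r d n (n - 1) * f d (n - 1) =
    2 + d * f d n + 2 * f d (n - 1) := by
  obtain ⟨m, rfl⟩ : ∃ m, n = m + 2 := ⟨n - 2, by omega⟩
  have hsub : m + 2 - 1 = m + 1 := by omega
  rw [hsub]
  have hne1 : f d (m + 1) ≠ 0 := fne d hd m
  have hne2 : f d (m + 2) ≠ 0 := fne d hd (m + 1)
  have hsum : (∑ j ∈ Finset.Icc 1 (m + 1), r d (m + 2) j)
      = f d (m + 2) * (f d (m + 1) / f d (m + 2)) := by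
    rw [← sum_tel d hd (m + 1), Finset.mul_sum]
    apply Finset.sum_congr rfl
    intro j _
    simp [r, div_eq_mul_inv]
  rw [hsum]
  have hr : r d (m + 2) (m + 1) * f d (m + 1) = 1 := by
    simp only [r]
    field_simp
  rw [hr]
  have h3 : f d (m + 3) = -d * f d (m + 2) - f d (m + 1) := by simp [f]
  rw [show m + 2 + 1 = m + 3 from rfl, h3]
  field_simp
  ring
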